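/- Let h : ℝⁿ → ℝ be convex and differentiable, and let λ > 0. Then the Moreau–Yosida envelope h^λ is differentiable and satisfies ‖∇h(x)‖ ≥ ‖∇h^λ(x)‖ for every x ∈ ℝⁿ. -/

import Mathlib

open Filter Topology

/-- The Moreau–Yosida envelope of `h` with parameter `lam`. -/
noncomputable def mye {n : ℕ} (h : EuclideanSpace ℝ (Fin n) → ℝ) (lam : ℝ)
    (x : EuclideanSpace ℝ (Fin n)) : ℝ :=
  ⨅ z : EuclideanSpace ℝ (Fin n), (h z + ‖x - z‖ ^ 2 / (2 * lam))

variable {n : ℕ}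

local notation "E" => EuclideanSpace ℝ (Fin n)

lemma support_ineq' (h : E → ℝ) (hconv : ConvexOn ℝ Set.univ h)
    (hdiff : Differentiable ℝ h) (x y : E) :
    h x + inner ℝ (gradient h x) (y - x) ≤ h y := by
  set φ : ℝ → ℝ := fun t => h (x + t • (y - x)) with hφ
  have hconvφ : ConvexOn ℝ Set.univ φ := by
    have h1 := hconv.comp_affineMap (AffineMap.lineMap x y : ℝ →ᵃ[ℝ] E)
    have h2 : φ = h ∘ (AffineMap.lineMap x y : ℝ →ᵃ[ℝ] E) := by
      funext t
      simp only [φ, Function.comp_apply, AffineMap.lineMap_apply_module]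
      congr 1
      module
    rw [h2]
    simpa using h1
  have hline : HasDerivAt (fun t : ℝ => x + t • (y - x)) (y - x) 0 := by
    simpa using ((hasDerivAt_id (0:ℝ)).smul_const (y - x)).const_add x
  have hx0 : x + (0:ℝ) • (y - x) = x := by simp
  have hdφ : HasDerivAt φ ((fderiv ℝ h x) (y - x)) 0 := by
    have h3 := ((hdiff (x + (0:ℝ) • (y - x))).hasFDerivAt).comp_hasDerivAt 0 hline
    rw [hx0] at h3
    exact h3
  have hslope : Filter.Tendsto (slope φ 0) (𝓝[≠] 0) (𝓝 ((fderiv ℝ h x) (y - x))) :=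
    hasDerivAt_iff_tendsto_slope.mp hdφ
  have hslope' : Filter.Tendsto (slope φ 0) (𝓝[>] 0) (𝓝 ((fderiv ℝ h x) (y - x))) :=
    hslope.mono_left (nhdsWithin_mono _ (fun t ht => ne_of_gt ht))
  have hle : (fderiv ℝ h x) (y - x) ≤ φ 1 - φ 0 := by
    refine le_of_tendsto hslope' ?_
    filter_upwards [Ioc_mem_nhdsGT_of_mem (Set.left_mem_Ico.mpr zero_lt_one)] with t ht
    have h01 : φ t ≤ (1 - t) * φ 0 + t * φ 1 := by
      have := hconvφ.2 (Set.mem_univ (0:ℝ)) (Set.mem_univ (1:ℝ))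
        (by linarith [ht.2] : (0:ℝ) ≤ 1 - t) (le_of_lt ht.1) (by ring)
      simpa [smul_eq_mul] using this
    rw [slope_def_field]
    simp only [sub_zero]
    rw [div_le_iff₀ ht.1]
    nlinarith [ht.1]
  have hinner : (inner ℝ (gradient h x) (y - x) : ℝ) = (fderiv ℝ h x) (y - x) := by
    rw [show gradient h x = (InnerProductSpace.toDual ℝ _).symm (fderiv ℝ h x) from rfl,
      ← InnerProductSpace.toDual_apply_apply, LinearIsometryEquiv.apply_symm_apply]
  have hφ0 : φ 0 = h x := by simp [φ]
  have hφ1 : φ 1 = h y := by simp [φ]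
  rw [hinner]
  rw [hφ0, hφ1] at hle
  linarith

lemma exists_min' (h : E → ℝ) (lam : ℝ) (hconv : ConvexOn ℝ Set.univ h)
    (hdiff : Differentiable ℝ h) (hlam : 0 < lam) (x : E) :
    ∃ p : E, ∀ z : E, h p + ‖x - p‖ ^ 2 / (2 * lam) ≤ h z + ‖x - z‖ ^ 2 / (2 * lam) := by
  set F : E → ℝ := fun z => h z + ‖x - z‖ ^ 2 / (2 * lam) with hF
  have hcont : Continuous F := by
    apply hdiff.continuous.add
    exact (((continuous_const.sub continuous_id).norm.pow 2).div_const _)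
  refine hcont.exists_forall_le' x ?_
  rw [hasBasis_cocompact.eventually_iff]
  refine ⟨Metric.closedBall x (2 * lam * ‖gradient h x‖), isCompact_closedBall _ _, ?_⟩
  intro z hz
  simp only [Set.mem_compl_iff, Metric.mem_closedBall, not_le, dist_eq_norm] at hz
  have hzx : ‖x - z‖ = ‖z - x‖ := norm_sub_rev _ _
  have hsupp := support_ineq' h hconv hdiff x z
  have hinner : -(‖gradient h x‖ * ‖z - x‖) ≤ (inner ℝ (gradient h x) (z - x) : ℝ) := by
    have := abs_real_inner_le_norm (gradient h x) (z - x)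
    rw [abs_le] at this
    exact this.1
  have hFx : F x = h x := by simp [F]
  have hne : (0:ℝ) ≤ ‖gradient h x‖ := norm_nonneg _
  rw [hFx]
  have : h x ≤ h z + ‖z - x‖ ^ 2 / (2 * lam) := by
    rw [← sub_nonneg]
    have h2 : (0:ℝ) ≤ ‖z - x‖ ^ 2 - 2 * lam * (‖gradient h x‖ * ‖z - x‖) := by
      nlinarith [norm_nonneg (z - x)]
    have h3 : (0:ℝ) < 2 * lam := by linarith
  
    calc (0:ℝ) ≤ (‖z - x‖ ^ 2 - 2 * lam * (‖gradient h x‖ * ‖z - x‖)) / (2 * lam) :=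
          div_nonneg h2 (le_of_lt h3)
      _ ≤ h z + ‖z - x‖ ^ 2 / (2 * lam) - h x := by
          rw [sub_div]
          have h4 : 2 * lam * (‖gradient h x‖ * ‖z - x‖) / (2 * lam) = ‖gradient h x‖ * ‖z - x‖ := by
            field_simp
          rw [h4]
          nlinarith [hsupp, hinner]
  simpa [F, hzx] using this

lemma mye_le' (h : E → ℝ) (lam : ℝ) (hconv : ConvexOn ℝ Set.univ h)
    (hdiff : Differentiable ℝ h) (hlam : 0 < lam) (x z : E) :
    mye h lam x ≤ h z + ‖x - z‖ ^ 2 / (2 * lam) := by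
  obtain ⟨p, hp⟩ := exists_min' h lam hconv hdiff hlam x
  exact ciInf_le ⟨_, by rintro _ ⟨w, rfl⟩; exact hp w⟩ z

lemma mye_eq' (h : E → ℝ) (lam : ℝ) (hconv : ConvexOn ℝ Set.univ h)
    (hdiff : Differentiable ℝ h) (hlam : 0 < lam) (x p : E)
    (hp : ∀ z : E, h p + ‖x - p‖ ^ 2 / (2 * lam) ≤ h z + ‖x - z‖ ^ 2 / (2 * lam)) :
    mye h lam x = h p + ‖x - p‖ ^ 2 / (2 * lam) :=
  le_antisymm (mye_le' h lam hconv hdiff hlam x p) (le_ciInf hp)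

lemma upper_bound {n : ℕ} (h : EuclideanSpace ℝ (Fin n) → ℝ) (lam : ℝ)
    (hconv : ConvexOn ℝ Set.univ h) (hdiff : Differentiable ℝ h) (hlam : 0 < lam)
    (x p : EuclideanSpace ℝ (Fin n))
    (hp : ∀ z, h p + ‖x - p‖ ^ 2 / (2 * lam) ≤ h z + ‖x - z‖ ^ 2 / (2 * lam))
    (y : EuclideanSpace ℝ (Fin n)) :
    mye h lam y ≤ mye h lam x + lam⁻¹ * (@inner ℝ _ _ (x - p) (y - x)) + ‖y - x‖ ^ 2 / (2 * lam) := by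
  have h1 : mye h lam y ≤ h p + ‖y - p‖ ^ 2 / (2 * lam) := mye_le' h lam hconv hdiff hlam y p
  have h2 : mye h lam x = h p + ‖x - p‖ ^ 2 / (2 * lam) := mye_eq' h lam hconv hdiff hlam x p hp
  have h3 : y - p = (x - p) + (y - x) := by abel
  have h4 : ‖y - p‖ ^ 2 = ‖x - p‖ ^ 2 + 2 * (@inner ℝ _ _ (x - p) (y - x)) + ‖y - x‖ ^ 2 := by
    rw [h3]; exact norm_add_sq_real _ _
  rw [h2]
  rw [h4] at h1
  have h5 : (‖x - p‖ ^ 2 + 2 * (@inner ℝ _ _ (x - p) (y - x)) + ‖y - x‖ ^ 2) / (2 * lam)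
      = ‖x - p‖ ^ 2 / (2 * lam) + lam⁻¹ * (@inner ℝ _ _ (x - p) (y - x)) + ‖y - x‖ ^ 2 / (2 * lam) := by
    have hl : lam ≠ 0 := ne_of_gt hlam
    field_simp
  rw [h5] at h1
  linarith

lemma midpoint_bound {n : ℕ} (h : EuclideanSpace ℝ (Fin n) → ℝ) (lam : ℝ)
    (hconv : ConvexOn ℝ Set.univ h) (hdiff : Differentiable ℝ h) (hlam : 0 < lam)
    (x v : EuclideanSpace ℝ (Fin n)) :
    2 * mye h lam x ≤ mye h lam (x + v) + mye h lam (x - v) := by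
  obtain ⟨a, ha⟩ := exists_min' h lam hconv hdiff hlam (x + v)
  obtain ⟨b, hb⟩ := exists_min' h lam hconv hdiff hlam (x - v)
  have hea : mye h lam (x + v) = h a + ‖x + v - a‖ ^ 2 / (2 * lam) :=
    mye_eq' h lam hconv hdiff hlam _ a ha
  have heb : mye h lam (x - v) = h b + ‖x - v - b‖ ^ 2 / (2 * lam) :=
    mye_eq' h lam hconv hdiff hlam _ b hb
  set m : EuclideanSpace ℝ (Fin n) := (2⁻¹ : ℝ) • a + (2⁻¹ : ℝ) • b with hm
  have h1 : mye h lam x ≤ h m + ‖x - m‖ ^ 2 / (2 * lam) := mye_le' h lam hconv hdiff hlam x m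
  have h2 : h m ≤ (2⁻¹ : ℝ) * h a + (2⁻¹ : ℝ) * h b := by
    have := hconv.2 (Set.mem_univ a) (Set.mem_univ b) (by norm_num : (0:ℝ) ≤ 2⁻¹)
      (by norm_num : (0:ℝ) ≤ 2⁻¹) (by norm_num : (2⁻¹ : ℝ) + 2⁻¹ = 1)
    simpa [hm, smul_eq_mul] using this
  set c : EuclideanSpace ℝ (Fin n) := x + v - a with hc
  set d : EuclideanSpace ℝ (Fin n) := x - v - b with hd
  have h3 : x - m = (2⁻¹ : ℝ) • (c + d) := by
    simp only [hm, hc, hd]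
    module
  have h4 : ‖x - m‖ ^ 2 = (1/4 : ℝ) * ‖c + d‖ ^ 2 := by
    rw [h3, norm_smul]
    rw [mul_pow]
    norm_num
  have h5 : ‖c + d‖ ^ 2 ≤ 2 * (‖c‖ ^ 2 + ‖d‖ ^ 2) := by
    nlinarith [norm_add_sq_real c d, real_inner_le_norm c d, sq_nonneg (‖c‖ - ‖d‖),
      norm_nonneg c, norm_nonneg d]
  have h6 : ‖x - m‖ ^ 2 / (2 * lam) ≤ (‖c‖ ^ 2 / (2 * lam) + ‖d‖ ^ 2 / (2 * lam)) / 2 := by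
    rw [h4]
    rw [div_le_div_iff₀ (by linarith : (0:ℝ) < 2 * lam) (by norm_num : (0:ℝ) < 2)]
    have expand : (‖c‖ ^ 2 / (2 * lam) + ‖d‖ ^ 2 / (2 * lam)) * (2 * lam)
        = ‖c‖ ^ 2 + ‖d‖ ^ 2 := by
      field_simp
    rw [expand]
    nlinarith [h5]
  rw [hea, heb]
  linarith

lemma key {n : ℕ} (h : EuclideanSpace ℝ (Fin n) → ℝ) (lam : ℝ)
    (hconv : ConvexOn ℝ Set.univ h) (hdiff : Differentiable ℝ h) (hlam : 0 < lam)
    (x : EuclideanSpace ℝ (Fin n)) :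
    ∃ p : EuclideanSpace ℝ (Fin n),
      HasGradientAt (mye h lam) (lam⁻¹ • (x - p)) x ∧ gradient h p = lam⁻¹ • (x - p) := by
  obtain ⟨p, hp⟩ := exists_min' h lam hconv hdiff hlam x
  have h2lam : (0:ℝ) < 2 * lam := by linarith
  refine ⟨p, ?_, ?_⟩
  · -- HasGradientAt
    rw [hasGradientAt_iff_hasFDerivAt, hasFDerivAt_iff_isLittleO_nhds_zero]
    rw [Asymptotics.isLittleO_iff]
    intro c hc
    have hball : ∀ᶠ v : EuclideanSpace ℝ (Fin n) in 𝓝 0, ‖v‖ < 2 * lam * c := by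
      have := Metric.ball_mem_nhds (0 : EuclideanSpace ℝ (Fin n))
        (by positivity : (0:ℝ) < 2 * lam * c)
      filter_upwards [this] with v hv
      simpa [dist_eq_norm] using hv
    filter_upwards [hball] with v hv
    have htd : (InnerProductSpace.toDual ℝ _ (lam⁻¹ • (x - p))) v
        = lam⁻¹ * (@inner ℝ _ _ (x - p) v) := by
      rw [InnerProductSpace.toDual_apply_apply, real_inner_smul_left]
    -- upper bound
    have hup : mye h lam (x + v) - mye h lam x - lam⁻¹ * (@inner ℝ _ _ (x - p) v)
        ≤ ‖v‖ ^ 2 / (2 * lam) := by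
      have := upper_bound h lam hconv hdiff hlam x p hp (x + v)
      have hxv : x + v - x = v := by abel
      rw [hxv] at this
      linarith
    -- lower bound
    have hlow : mye h lam x + lam⁻¹ * (@inner ℝ _ _ (x - p) v) - ‖v‖ ^ 2 / (2 * lam)
        ≤ mye h lam (x + v) := by
      have hmid := midpoint_bound h lam hconv hdiff hlam x v
      have hdn := upper_bound h lam hconv hdiff hlam x p hp (x - v)
      have hxv : x - v - x = -v := by abel
      rw [hxv] at hdn
      have hinn : (@inner ℝ _ _ (x - p) (-v)) = -(@inner ℝ _ _ (x - p) v) := by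
        rw [inner_neg_right]
      rw [hinn] at hdn
      have hnv : ‖(-v : EuclideanSpace ℝ (Fin n))‖ = ‖v‖ := norm_neg v
      rw [hnv] at hdn
      linarith
    have habs : |mye h lam (x + v) - mye h lam x - lam⁻¹ * (@inner ℝ _ _ (x - p) v)|
        ≤ ‖v‖ ^ 2 / (2 * lam) := by
      rw [abs_le]
      constructor <;> linarith
    rw [htd]
    have hfin : ‖v‖ ^ 2 / (2 * lam) ≤ c * ‖v‖ := by
      rw [div_le_iff₀ h2lam]
      nlinarith [norm_nonneg v]
    calc ‖mye h lam (x + v) - mye h lam x - lam⁻¹ * (@inner ℝ _ _ (x - p) v)‖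
        = |mye h lam (x + v) - mye h lam x - lam⁻¹ * (@inner ℝ _ _ (x - p) v)| := rfl
      _ ≤ ‖v‖ ^ 2 / (2 * lam) := habs
      _ ≤ c * ‖v‖ := hfin
  · -- optimality condition
    have hlocal : IsLocalMin (fun z => h z + ‖x - z‖ ^ 2 / (2 * lam)) p :=
      Filter.Eventually.of_forall hp
    have hd1 : HasFDerivAt (fun z : EuclideanSpace ℝ (Fin n) => x - z)
        (-(ContinuousLinearMap.id ℝ _)) p := (hasFDerivAt_id p).const_sub x
    have hd2 := hd1.norm_sq
    have hd3 : HasFDerivAt (fun z : EuclideanSpace ℝ (Fin n) => ‖x - z‖ ^ 2 / (2 * lam))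
        ((2 * lam)⁻¹ • ((2:ℕ) • ((innerSL ℝ) (x - p)).comp
          (-ContinuousLinearMap.id ℝ (EuclideanSpace ℝ (Fin n))))) p := by
      simpa only [div_eq_inv_mul] using hd2.const_mul ((2 * lam)⁻¹)
    have hd4 := ((hdiff p).hasFDerivAt).add hd3
    have heq := hlocal.hasFDerivAt_eq_zero hd4
    have hev : ∀ w : EuclideanSpace ℝ (Fin n),
        (fderiv ℝ h p) w = lam⁻¹ * (@inner ℝ _ _ (x - p) w) := by
      intro w
      have := congrArg (fun L => L w) heq
      simp only [ContinuousLinearMap.add_apply, ContinuousLinearMap.zero_apply,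
        ContinuousLinearMap.smul_apply, ContinuousLinearMap.coe_smul',
        Pi.smul_apply, ContinuousLinearMap.comp_apply, ContinuousLinearMap.neg_apply,
        ContinuousLinearMap.coe_id', id_eq, innerSL_apply_apply, smul_eq_mul] at this
      have hl : lam ≠ 0 := ne_of_gt hlam
      have h2 : (2:ℝ) • (@inner ℝ _ _ (x - p) (-w)) = -2 * (@inner ℝ _ _ (x - p) w) := by
        rw [inner_neg_right]; ring_nf
      field_simp at this ⊢
      nlinarith [this, inner_neg_right (𝕜 := ℝ) (x - p) w, h2, two_nsmul (inner ℝ (x - p) (-w))]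
    have hg : HasGradientAt h (lam⁻¹ • (x - p)) p := by
      rw [hasGradientAt_iff_hasFDerivAt]
      have : (InnerProductSpace.toDual ℝ _) (lam⁻¹ • (x - p)) = fderiv ℝ h p := by
        apply ContinuousLinearMap.ext
        intro w
        rw [InnerProductSpace.toDual_apply_apply, real_inner_smul_left, hev w]
      rw [this]
      exact (hdiff p).hasFDerivAt
    exact hg.gradient


theorem stmt_7 {n : ℕ} (h : EuclideanSpace ℝ (Fin n) → ℝ) (lam : ℝ)
    (hconv : ConvexOn ℝ Set.univ h) (hdiff : Differentiable ℝ h)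
    (hlam : 0 < lam) :
    Differentiable ℝ (mye h lam) ∧
    ∀ x : EuclideanSpace ℝ (Fin n),
      ‖gradient (mye h lam) x‖ ≤ ‖gradient h x‖ := by
  constructor
  · intro x
    obtain ⟨p, hg, -⟩ := key h lam hconv hdiff hlam x
    exact hg.differentiableAt
  · intro x
    obtain ⟨p, hg, hgp⟩ := key h lam hconv hdiff hlam x
    rw [hg.gradient, ← hgp]
    have s1 := support_ineq' h hconv hdiff p x
    have s2 := support_ineq' h hconv hdiff x p
    have hxp : x - p = lam • gradient h p := by
      rw [hgp, smul_smul, mul_inv_cancel₀ (ne_of_gt hlam), one_smul]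
    have hinn1 : (@inner ℝ _ _ (gradient h x) (p - x))
        = -(@inner ℝ _ _ (gradient h x) (x - p)) := by
      rw [← inner_neg_right, neg_sub]
    have hkey : (@inner ℝ _ _ (gradient h p) (x - p))
        ≤ (@inner ℝ _ _ (gradient h x) (x - p)) := by
      rw [hinn1] at s2
      linarith
    rw [hxp, real_inner_smul_right, real_inner_smul_right,
      real_inner_self_eq_norm_sq] at hkey
    have hcs : (@inner ℝ _ _ (gradient h x) (gradient h p))
        ≤ ‖gradient h x‖ * ‖gradient h p‖ := real_inner_le_norm _ _
    have hsq : ‖gradient h p‖ ^ 2 ≤ ‖gradient h x‖ * ‖gradient h p‖ := by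
      nlinarith [hkey, hcs, hlam]
    rcases eq_or_lt_of_le (norm_nonneg (gradient h p)) with hz | hz
    · rw [← hz]; exact norm_nonneg _
    · have := le_of_mul_le_mul_right (by nlinarith : ‖gradient h p‖ * ‖gradient h p‖ ≤ ‖gradient h x‖ * ‖gradient h p‖) hz
      exact this
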